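/- Let T ⊆ ℝⁿ be a hyperplane through 0, α ∈ T, f : T → T^⊥ a function continuous at α, a = α + f(α), and A = {χ + f(χ) : χ ∈ T}. If the tangent cone Tan(A, a) is contained in T, then f is differentiable at α with Df(α) = 0, and Tan(A, a) = T. -/

import Mathlib

open Set Filter Metric MeasureTheory Topology ENNReal

noncomputable section

abbrev Euc (n : ℕ) := EuclideanSpace ℝ (Fin n)

def IsNorm {n : ℕ} (φ : Euc n → ℝ) : Prop :=
  (∀ x, φ x = 0 ↔ x = 0) ∧ (∀ (c : ℝ) (x : Euc n), φ (c • x) = |c| * φ x) ∧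
    (∀ x y, φ (x + y) ≤ φ x + φ y)

def StrictlyConvexNorm {n : ℕ} (φ : Euc n → ℝ) : Prop :=
  IsNorm φ ∧ ∀ a b, φ (a + b) = φ a + φ b → φ b • a = φ a • b

def UniformlyConvexNorm {n : ℕ} (φ : Euc n → ℝ) : Prop :=
  IsNorm φ ∧ ∃ γ : ℝ, 0 < γ ∧ ConvexOn ℝ Set.univ (fun x => φ x - γ * ‖x‖)

def distφ {n : ℕ} (φ : Euc n → ℝ) (K : Set (Euc n)) (x : Euc n) : ℝ :=
  sInf {r | ∃ y ∈ K, r = φ (x - y)}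

def nearφ {n : ℕ} (φ : Euc n → ℝ) (K : Set (Euc n)) (x : Euc n) : Set (Euc n) :=
  {a ∈ K | φ (x - a) = distφ φ K x}

def rhoφ {n : ℕ} (φ : Euc n → ℝ) (K : Set (Euc n)) (x : Euc n) : ℝ≥0∞ :=
  sSup {r : ℝ≥0∞ | ∃ s : ℝ, ∃ a ∈ nearφ φ K x,
    r = ENNReal.ofReal s ∧ distφ φ K (a + s • (x - a)) = s * distφ φ K x}

def normalBundle {n : ℕ} (φ : Euc n → ℝ) (K : Set (Euc n)) : Set (Euc n × Euc n) :=
  {p | p.1 ∈ K ∧ φ p.2 = 1 ∧ ∃ s : ℝ, 0 < s ∧ distφ φ K (p.1 + s • p.2) = s}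

def reachφ {n : ℕ} (φ : Euc n → ℝ) (K : Set (Euc n)) (p : Euc n × Euc n) : ℝ≥0∞ :=
  sSup {r : ℝ≥0∞ | ∃ s : ℝ, 0 < s ∧ r = ENNReal.ofReal s ∧ distφ φ K (p.1 + s • p.2) = s}

def cutLocus {n : ℕ} (φ : Euc n → ℝ) (K : Set (Euc n)) : Set (Euc n) :=
  {x | ∃ p ∈ normalBundle φ K, reachφ φ K p ≠ ⊤ ∧
    x = p.1 + (reachφ φ K p).toReal • p.2}

def PtTwiceDiffAt {n : ℕ} (f : Euc n → ℝ) (x : Euc n) : Prop :=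
  ∃ (L : Euc n →L[ℝ] ℝ) (Q : Euc n →L[ℝ] Euc n →L[ℝ] ℝ),
    Tendsto (fun y => |f y - f x - L (y - x) - Q (y - x) (y - x)| / ‖y - x‖ ^ 2)
      (𝓝[≠] x) (𝓝 0)

theorem stmt17 {n : ℕ} (hn : 1 ≤ n) (T : Submodule ℝ (Euc n))
    (hT : Module.finrank ℝ T = n - 1)
    (α : Euc n) (hα : α ∈ T) (f : Euc n → Euc n)
    (hfval : ∀ χ ∈ T, f χ ∈ Tᗮ)
    (hfc : ContinuousWithinAt f T α)
    (A : Set (Euc n)) (hA : A = {y | ∃ χ ∈ T, y = χ + f χ})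
    (a : Euc n) (ha : a = α + f α)
    (htan : tangentConeAt ℝ A a ⊆ T) :
    HasFDerivWithinAt f (0 : Euc n →L[ℝ] Euc n) T α ∧ tangentConeAt ℝ A a = T := by
  classical
  have haA : a ∈ A := by
    rw [hA, ha]; exact ⟨α, hα, rfl⟩
  -- Part 1 : derivative is 0
  have hderiv : HasFDerivWithinAt f (0 : Euc n →L[ℝ] Euc n) T α := by
    refine HasFDerivAtFilter.of_isLittleO ?_
    simp only [ContinuousLinearMap.zero_apply, sub_zero]
    rw [Asymptotics.isLittleO_iff]
    intro c hc
    by_contra hev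
    have hfreq : ∃ᶠ x in 𝓝[↑T] α, c * ‖x - α‖ < ‖f x - f α‖ := by
      rw [Filter.not_eventually, Filter.prod_pure, Filter.frequently_map] at hev
      exact hev.mono (fun x hx => lt_of_not_ge hx)
    rw [Metric.nhdsWithin_basis_ball.frequently_iff] at hfreq
    -- choose sequence
    have hseq : ∀ j : ℕ, ∃ x, x ∈ ball α (1 / (j + 1)) ∩ ↑T ∧
        c * ‖x - α‖ < ‖f x - f α‖ := fun j =>
      hfreq (1 / (j + 1)) (by positivity)
    choose x hx hxlt using hseq
    have hxT : ∀ j, x j ∈ T := fun j => (hx j).2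
    have hxball : ∀ j, dist (x j) α < 1 / (j + 1) := fun j => (hx j).1
    have hxtendsto : Tendsto x atTop (𝓝[↑T] α) := by
      rw [tendsto_nhdsWithin_iff]
      constructor
      · rw [tendsto_iff_dist_tendsto_zero]
        refine squeeze_zero (fun j => dist_nonneg) (fun j => (hxball j).le) ?_
        exact tendsto_one_div_add_atTop_nhds_zero_nat
      · exact Eventually.of_forall hxT
    set g : ℕ → Euc n := fun j => f (x j) - f α with hg
    have hgT : ∀ j, g j ∈ Tᗮ := fun j => Tᗮ.sub_mem (hfval _ (hxT j)) (hfval _ hα)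
    have hgpos : ∀ j, 0 < ‖g j‖ := fun j =>
      lt_of_le_of_lt (by positivity) (hxlt j)
    set d : ℕ → Euc n := fun j => (x j - α) + g j with hd
    have hdA : ∀ j, a + d j ∈ A := by
      intro j
      rw [hA]
      refine ⟨x j, hxT j, ?_⟩
      rw [ha, hd, hg]; beta_reduce; abel
    have hdnorm : ∀ j, ‖d j‖ ≤ ((1 + c) / c) * ‖g j‖ := by
      intro j
      have h1 : ‖x j - α‖ ≤ (1 / c) * ‖g j‖ := by
        rw [div_mul_eq_mul_div, le_div_iff₀ hc]
        nlinarith [(hxlt j).le]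
      calc ‖d j‖ ≤ ‖x j - α‖ + ‖g j‖ := norm_add_le _ _
        _ ≤ (1 / c) * ‖g j‖ + 1 * ‖g j‖ := by
            refine add_le_add h1 (by rw [one_mul])
        _ = ((1 + c) / c) * ‖g j‖ := by field_simp
    have hdpos : ∀ j, 0 < ‖d j‖ := by
      intro j
      rcases eq_or_lt_of_le (norm_nonneg (d j)) with h | h
      · exfalso
        have hd0 : d j = 0 := by rwa [eq_comm, norm_eq_zero] at h
        -- then g j = orthogonal part is 0
        have hneg : g j = -(x j - α) :=
          eq_neg_of_add_eq_zero_left (show g j + (x j - α) = 0 by rw [add_comm]; exact hd0)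
        have hgmem : g j ∈ T := hneg ▸ T.neg_mem (T.sub_mem (hxT j) hα)
        have hg0 : g j = 0 :=
          inner_self_eq_zero.1 ((Submodule.mem_orthogonal _ _).1 (hgT j) _ hgmem)
        exact absurd (hg0 ▸ hgpos j) (by simp)
      · exact h
    -- unit vectors
    set u : ℕ → Euc n := fun j => ‖d j‖⁻¹ • d j with hu
    have humem : ∀ j, u j ∈ sphere (0 : Euc n) 1 := by
      intro j
      simp [hu, norm_smul, abs_of_nonneg (inv_nonneg.2 (norm_nonneg _)),
        inv_mul_cancel₀ (hdpos j).ne']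
    obtain ⟨v, hvs, φ, hφ, hvtend⟩ := (isCompact_sphere (0 : Euc n) 1).tendsto_subseq humem
    have hdtend : Tendsto (fun j => d j) atTop (𝓝 0) := by
      have h1 : Tendsto (fun j => x j - α) atTop (𝓝 0) := by
        have := (tendsto_nhdsWithin_iff.1 hxtendsto).1
        simpa using this.sub (tendsto_const_nhds (x := α))
      have h2 : Tendsto g atTop (𝓝 0) := by
        have := hfc.tendsto.comp hxtendsto
        simpa [hg] using this.sub (tendsto_const_nhds (x := f α))
      simpa using h1.add h2
    have hvtan : v ∈ tangentConeAt ℝ A a := by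
      rw [mem_tangentConeAt_iff_exists_seq_norm_tendsto_atTop]
      refine ⟨fun j => ‖d (φ j)‖⁻¹, fun j => d (φ j), ?_, ?_, ?_⟩
      swap
      · exact Eventually.of_forall fun j => hdA (φ j)
      · have hkey : Tendsto (fun j => ‖d (φ j)‖⁻¹) atTop atTop := by
          refine tendsto_inv_nhdsGT_zero.comp ?_
          rw [tendsto_nhdsWithin_iff]
          refine ⟨?_, Eventually.of_forall fun j => hdpos (φ j)⟩
          have := hdtend.norm.comp (hφ.tendsto_atTop)
          simpa [Function.comp_def] using this
        refine hkey.congr fun j => ?_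
        rw [norm_inv, norm_norm]
      · exact hvtend
    have hvT : v ∈ T := htan hvtan
    -- orthogonal projection onto Tᗮ
    set P : Euc n →L[ℝ] Euc n := (Tᗮ).subtypeL.comp (Submodule.orthogonalProjectionOnto Tᗮ) with hP
    have hPT : ∀ w ∈ T, P w = 0 := by
      intro w hw
      have : Submodule.orthogonalProjectionOnto Tᗮ w = 0 :=
        Submodule.orthogonalProjectionOnto_apply_of_mem_orthogonal
          (Submodule.le_orthogonal_orthogonal T hw)
      simp [hP, this]
    have hPu : ∀ j, P (u j) = ‖d j‖⁻¹ • g j := by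
      intro j
      have h1 : P (g j) = g j := by
        have := Submodule.orthogonalProjectionOnto_mem_subspace_eq_self (K := Tᗮ) ⟨g j, hgT j⟩
        simp [hP, this]
      have h2 : P (x j - α) = 0 := hPT _ (T.sub_mem (hxT j) hα)
      have h3 : P (d j) = g j := by
        show P ((x j - α) + g j) = g j
        rw [map_add, h1, h2, zero_add]
      show P (‖d j‖⁻¹ • d j) = ‖d j‖⁻¹ • g j
      rw [_root_.map_smul, h3]
    have hlow : ∀ j, c / (1 + c) ≤ ‖P (u j)‖ := by
      intro j
      rw [hPu j, norm_smul, norm_inv, norm_norm, inv_mul_eq_div,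
        le_div_iff₀ (hdpos j), div_mul_eq_mul_div, div_le_iff₀ (by positivity : (0:ℝ) < 1 + c)]
      have h5 : c * ((1 + c) / c * ‖g j‖) = (1 + c) * ‖g j‖ := by field_simp
      have h6 := mul_le_mul_of_nonneg_left (hdnorm j) hc.le
      rw [h5] at h6
      linarith
    have hPlim : Tendsto (fun j => ‖P (u (φ j))‖) atTop (𝓝 0) := by
      have : Tendsto (fun j => P (u (φ j))) atTop (𝓝 (P v)) :=
        (P.continuous.tendsto v).comp hvtend
      rw [hPT v hvT] at this
      simpa using this.norm
    have hbad : c / (1 + c) ≤ (0 : ℝ) :=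
      ge_of_tendsto hPlim (Eventually.of_forall fun j => hlow (φ j))
    exact absurd hbad (not_le.2 (by positivity))
  refine ⟨hderiv, Subset.antisymm htan ?_⟩
  -- Part 2 : T ⊆ tangent cone
  intro τ hτ
  set t : ℕ → ℝ := fun j => ((j : ℝ) + 1)⁻¹ with ht
  have htpos : ∀ j, 0 < t j := fun j => by positivity
  set χ : ℕ → Euc n := fun j => α + t j • τ with hχ
  have hχT : ∀ j, χ j ∈ T := fun j => T.add_mem hα (T.smul_mem _ hτ)
  have hχtend : Tendsto χ atTop (𝓝[↑T] α) := by
    rw [tendsto_nhdsWithin_iff]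
    constructor
    · have h0 : Tendsto t atTop (𝓝 0) := by
        simpa [ht, one_div] using (tendsto_one_div_add_atTop_nhds_zero_nat : Tendsto (fun n : ℕ => 1 / ((n : ℝ) + 1)) atTop (𝓝 0))
      have : Tendsto (fun j => t j • τ) atTop (𝓝 ((0:ℝ) • τ)) := h0.smul_const τ
      simpa [hχ] using (tendsto_const_nhds (x := α)).add this
    · exact Eventually.of_forall hχT
  rw [mem_tangentConeAt_iff_exists_seq_norm_tendsto_atTop]
  refine ⟨fun j => (j : ℝ) + 1, fun j => χ j + f (χ j) - a, ?_, ?_, ?_⟩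
  swap
  · refine Eventually.of_forall fun j => ?_
    rw [hA]
    exact ⟨χ j, hχT j, by beta_reduce; abel⟩
  · have h : Tendsto (fun j : ℕ => (j : ℝ) + 1) atTop atTop :=
      tendsto_atTop_add_const_right _ 1 tendsto_natCast_atTop_atTop
    refine h.congr fun j => ?_
    rw [Real.norm_eq_abs, abs_of_pos (by positivity)]
  · -- limit is τ
    have key : ∀ j : ℕ, ((j:ℝ) + 1) • (χ j + f (χ j) - a)
        = τ + ((j:ℝ)+1) • (f (χ j) - f α) := by
      intro j
      have h1 : χ j + f (χ j) - a = t j • τ + (f (χ j) - f α) := by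
        rw [hχ, ha]; beta_reduce; abel
      rw [h1, smul_add, smul_smul]
      simp only [ht]
      rw [mul_inv_cancel₀ (by positivity : ((j:ℝ)+1) ≠ 0), one_smul]
    have hsmalltend : Tendsto (fun j : ℕ => ((j:ℝ)+1) • (f (χ j) - f α)) atTop (𝓝 0) := by
      have hlo : (fun x => f x - f α) =o[𝓝[↑T] α] (fun x => x - α) := by
        have := hderiv.isLittleO
        simpa using this
      have hlo2 := hlo.comp_tendsto hχtend
      rw [NormedAddCommGroup.tendsto_nhds_zero]
      intro ε hε
      have hc : (0:ℝ) < ε / (2 * (‖τ‖ + 1)) := by positivity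
      have := (Asymptotics.isLittleO_iff.1 hlo2) hc
      refine this.mono fun j hj => ?_
      have hnorm : ‖(χ j - α : Euc n)‖ = t j * ‖τ‖ := by
        rw [hχ]
        simp [norm_smul, abs_of_pos (htpos j)]
      rw [Function.comp_apply, Function.comp_apply, hnorm] at hj
      have h2 : ‖((j:ℝ)+1) • (f (χ j) - f α)‖ = ((j:ℝ)+1) * ‖f (χ j) - f α‖ := by
        rw [norm_smul, Real.norm_eq_abs, abs_of_pos (by positivity)]
      rw [h2]
      have h3 : ((j:ℝ)+1) * (t j * ‖τ‖) = ‖τ‖ := by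
        rw [ht, ← mul_assoc, mul_inv_cancel₀ (by positivity : ((j:ℝ)+1) ≠ 0), one_mul]
      calc ((j:ℝ)+1) * ‖f (χ j) - f α‖ ≤ ((j:ℝ)+1) * (ε / (2*(‖τ‖+1)) * (t j * ‖τ‖)) := by
            exact mul_le_mul_of_nonneg_left hj (by positivity)
        _ = ε / (2*(‖τ‖+1)) * (((j:ℝ)+1) * (t j * ‖τ‖)) := by ring
        _ = ε / (2*(‖τ‖+1)) * ‖τ‖ := by rw [h3]
        _ < ε := by
            rw [div_mul_eq_mul_div, div_lt_iff₀ (by positivity)]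
            nlinarith [norm_nonneg τ]
    have := (tendsto_const_nhds (x := τ)).add hsmalltend
    rw [add_zero] at this
    exact this.congr fun j => (key j).symm
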